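/- Let R be a commutative ring, let D : R → R be a derivation (an additive map satisfying D(xy) = x·D(y) + D(x)·y), and let L, K, Q be n×n matrices over R. Extend D entrywise to matrices. If D(L) = LK − KL and D(Q) = QK − KQ − L, then for every integer m ≥ 0, D(Tr(Q·L^m)) = −Tr(L^{m+1}). -/
import Mathlib


open Matrix

/-- if `D` is a derivation on a commutative ring `R`, extended
entrywise to matrices, with `D(L) = LK - KL` and `D(Q) = QK - KQ - L`, then for
every `m ≥ 0`, `D(Tr(Q·L^m)) = -Tr(L^{m+1})`. -/
theorem stmt7 (R : Type*) [CommRing R] (D : R → R)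
    (hD_add : ∀ x y : R, D (x + y) = D x + D y)
    (hD_mul : ∀ x y : R, D (x * y) = x * D y + D x * y)
    (n : ℕ) (L K Q : Matrix (Fin n) (Fin n) R)
    (hL : L.map D = L * K - K * L)
    (hQ : Q.map D = Q * K - K * Q - L) :
    ∀ m : ℕ, D ((Q * L ^ m).trace) = -(L ^ (m + 1)).trace := by
  have hD0 : D 0 = 0 := by
    have := hD_add 0 0
    simp at this
    exact this
  have hD1 : D 1 = 0 := by
    have := hD_mul 1 1
    simp at this
    exact this
  let Dh : R →+ R := AddMonoidHom.mk' D hD_add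
  have htr : ∀ M : Matrix (Fin n) (Fin n) R, D M.trace = (M.map D).trace := by
    intro M
    show Dh M.trace = _
    simp [Matrix.trace, map_sum, Matrix.diag, Dh]
  have hmul : ∀ A B : Matrix (Fin n) (Fin n) R,
      (A * B).map D = A * B.map D + A.map D * B := by
    intro A B
    ext i j
    simp only [Matrix.map_apply, Matrix.mul_apply, Matrix.add_apply]
    rw [show D (∑ k, A i k * B k j) = Dh (∑ k, A i k * B k j) from rfl, map_sum,
      ← Finset.sum_add_distrib]
    exact Finset.sum_congr rfl fun k _ => hD_mul _ _
  have hpow : ∀ m : ℕ, (L ^ m).map D = L ^ m * K - K * L ^ m := by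
    intro m
    induction m with
    | zero =>
      ext i j
      by_cases h : i = j <;> simp [Matrix.one_apply, h, hD0, hD1]
    | succ m ih =>
      rw [pow_succ, hmul, ih, hL]
      noncomm_ring
  intro m
  rw [htr, hmul, hpow, hQ]
  have h1 : (Q * (L ^ m * K - K * L ^ m) + (Q * K - K * Q - L) * L ^ m)
      = (Q * (L ^ m * K)) - (K * (Q * L ^ m)) - L ^ (m + 1) := by
    rw [pow_succ']
    noncomm_ring
  rw [h1]
  simp only [Matrix.trace_sub]
  rw [Matrix.trace_mul_comm K (Q * L ^ m), mul_assoc]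
  ring
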